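/- For a word w over the alphabet {a_1, ..., a_m} and each i, the support of the degree-one tropical polynomial g_i^w (in variables x_1, ..., x_m) equals the a_i-height γ^{w,a_i} of the staircase path of w; explicitly, the support is {c(w_1⋯w_{h-1}) : w_h = a_i}, the set of contents of prefixes of w ending just before an occurrence of a_i, and this set equals {max{p ∈ γ^w : p_i = j} : 0 ≤ j ≤ |w|_{a_i} - 1}. -/

import Mathlib

/-- The content of a word over the alphabet `Fin m`: the number of occurrences
of each letter. -/
def content {m : ℕ} (u : List (Fin m)) : Fin m → ℕ := fun s => u.count s

/-- The staircase path of `w`: the set of contents of all prefixes of `w`. -/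
def gammaPath {m : ℕ} (w : List (Fin m)) : Set (Fin m → ℕ) :=
  {p | ∃ t ≤ w.length, p = content (w.take t)}

lemma content_take_mono {m : ℕ} (w : List (Fin m)) {t t' : ℕ} (h : t ≤ t') :
    content (w.take t) ≤ content (w.take t') := by
  intro s
  have : w.take t = (w.take t').take t := by rw [List.take_take, min_eq_left h]
  rw [content, content, this]
  exact (List.take_sublist _ _).count_le s

lemma count_take_succ {m : ℕ} (w : List (Fin m)) {t : ℕ} (ht : t < w.length) (i : Fin m) :
    (w.take (t+1)).count i = (w.take t).count i + if w.get ⟨t, ht⟩ = i then 1 else 0 := by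
  rw [← List.take_concat_get ht, List.concat_eq_append, List.count_append]
  simp [List.count_singleton']

lemma exists_take_count {m : ℕ} (w : List (Fin m)) (i : Fin m) {j : ℕ} (hj : j ≤ w.count i) :
    ∃ t ≤ w.length, (w.take t).count i = j := by
  have hbase : ∃ t, j ≤ (w.take t).count i := ⟨w.length, by simpa using hj⟩
  classical
  have hspec : j ≤ (w.take (Nat.find hbase)).count i := Nat.find_spec hbase
  have htlen : Nat.find hbase ≤ w.length :=
    Nat.find_le (by simpa using hj)
  refine ⟨Nat.find hbase, htlen, le_antisymm ?_ hspec⟩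
  cases h0 : Nat.find hbase with
  | zero => rw [h0] at hspec; simpa using hspec
  | succ s =>
    have hmin : ¬ j ≤ (w.take s).count i := Nat.find_min hbase (by omega)
    have hs : s < w.length := by omega
    have := count_take_succ w hs i
    rw [h0] at hspec
    split at this <;> omega

/-- The support of the degree-one tropical polynomial `g_i^w`, i.e. the set of
contents of prefixes of `w` ending just before an occurrence of the letter `i`,
equals the `a_i`-height of the staircase path of `w`: the set of coordinatewise
maxima `max{p ∈ γ^w : p_i = j}` for `0 ≤ j < |w|_{a_i}`. -/
theorem support_eq_height {m : ℕ} (w : List (Fin m)) (i : Fin m) :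
    {p : Fin m → ℕ | ∃ h : Fin w.length, w.get h = i ∧ p = content (w.take h)} =
      {q : Fin m → ℕ | ∃ j < w.count i, q ∈ gammaPath w ∧ q i = j ∧
        ∀ p ∈ gammaPath w, p i = j → p ≤ q} := by
  classical
  ext p
  simp only [Set.mem_setOf_eq]
  constructor
  · rintro ⟨h, hi, rfl⟩
    refine ⟨(w.take h).count i, ?_, ⟨h, h.isLt.le, rfl⟩, rfl, ?_⟩
    · have h1 := count_take_succ w h.isLt i
      rw [if_pos hi] at h1
      calc (w.take h).count i < (w.take (h+1)).count i := by omega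
        _ ≤ w.count i := by
          simpa [content] using content_take_mono w (t := (h:ℕ)+1) (t' := w.length)
            (by omega) i
    · rintro q ⟨t, htl, rfl⟩ hq
      apply content_take_mono
      by_contra hlt
      push_neg at hlt
      have h1 := count_take_succ w h.isLt i
      rw [if_pos hi] at h1
      have h2 := content_take_mono w (t := (h:ℕ)+1) (t' := t) hlt i
      simp only [content] at h2 hq
      omega
  · rintro ⟨j, hj, ⟨t, htl, rfl⟩, hqi, hmax⟩
    simp only [content] at hqi
    -- t0 : largest t' ≤ w.length with count = j
    set P : ℕ → Prop := fun s => (w.take s).count i = j with hP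
    set t0 := Nat.findGreatest P w.length with ht0
    have hP0 : P t0 := Nat.findGreatest_spec (m := t) htl hqi
    have hP0' : (w.take t0).count i = j := hP0
    have ht0l : t0 ≤ w.length := Nat.findGreatest_le _
    have ht0lt : t0 < w.length := by
      rcases lt_or_eq_of_le ht0l with h | h
      · exact h
      · exfalso; rw [hP, h] at hP0; simp at hP0; omega
    have hstep : ¬ P (t0 + 1) := by
      intro hc
      exact absurd (Nat.le_findGreatest (n := w.length) (by omega) hc) (by omega)
    have hget : w.get ⟨t0, ht0lt⟩ = i := by
      by_contra hne
      have h1 := count_take_succ w ht0lt i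
      rw [if_neg hne] at h1
      exact hstep (show (w.take (t0+1)).count i = j by omega)
    -- show content (take t) = content (take t0)
    have hle : content (w.take t) ≤ content (w.take t0) := by
      have htt0 : t ≤ t0 := Nat.le_findGreatest htl hqi
      exact content_take_mono w htt0
    have hge : content (w.take t0) ≤ content (w.take t) :=
      hmax _ ⟨t0, ht0l, rfl⟩ hP0
    refine ⟨⟨t0, ht0lt⟩, hget, le_antisymm hle hge⟩
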